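/- Let (G,·,e,⊙) be a left group-e-semigroup. Then the following are equivalent: (b) e⊙e is a central idempotent of (G,⊙) and (e⊙e)⊙δ = δ for every central idempotent δ of (G,⊙); (c) the set of central idempotents of (G,⊙) is exactly {e⊙e}. (Here δ is a central idempotent of (G,⊙) means δ⊙δ = δ and δ⊙x = x⊙δ for all x ∈ G.) -/
import Mathlib


/-- In a left group-`e`-semigroup `(G, ·, e, ⊙)` (group identity `e = 1`),
the following are equivalent:
(b) `e ⊙ e` is a central idempotent of `(G, ⊙)` and `(e ⊙ e) ⊙ δ = δ` for every central
idempotent `δ` of `(G, ⊙)`;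
(c) the set of central idempotents of `(G, ⊙)` is exactly `{e ⊙ e}`. -/
theorem stmt_7 {G : Type*} [Group G] (op : G → G → G)
    (hassoc : ∀ x y z : G, op (op x y) z = op x (op y z))
    (hjoin : ∀ x y : G, op 1 (x * y) = op 1 (op x y)) :
    ((op (op 1 1) (op 1 1) = op 1 1 ∧ ∀ x : G, op (op 1 1) x = op x (op 1 1)) ∧
      (∀ δ : G, (op δ δ = δ ∧ ∀ x : G, op δ x = op x δ) → op (op 1 1) δ = δ)) ↔
    {δ : G | op δ δ = δ ∧ ∀ x : G, op δ x = op x δ} = {op 1 1} := by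
  -- general facts about f := op 1
  have ffy : ∀ z : G, op 1 (op 1 z) = op 1 z := by
    intro z
    have := hjoin 1 z
    rw [one_mul] at this
    exact this.symm
  have fleft : ∀ x y : G, op 1 (op 1 x * y) = op 1 (x * y) := by
    intro x y
    rw [hjoin, hassoc, ffy, ← hjoin]
  have faux : ∀ x y : G, op 1 (x * op 1 y) = op 1 (x * y) := by
    intro x y
    calc op 1 (x * op 1 y) = op 1 (op x (op 1 y)) := hjoin _ _
      _ = op 1 (op (op x 1) y) := by rw [hassoc]
      _ = op 1 (op x 1 * y) := (hjoin _ _).symm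
      _ = op 1 (op 1 (op x 1) * y) := (fleft _ _).symm
      _ = op 1 (op 1 (x * 1) * y) := by rw [← hjoin]
      _ = op 1 ((x * 1) * y) := fleft _ _
      _ = op 1 (x * y) := by rw [mul_one]
  constructor
  · rintro ⟨⟨hidem, hcent⟩, habs⟩
    ext δ
    simp only [Set.mem_setOf_eq, Set.mem_singleton_iff]
    constructor
    · rintro ⟨hδ, hδc⟩
      have hfδ : op 1 δ = δ := by
        have h := habs δ ⟨hδ, hδc⟩
        rwa [hassoc, ← hjoin, one_mul] at h
      have hop : ∀ x : G, op δ x = op 1 (δ * x) := by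
        intro x
        conv_lhs => rw [← hfδ]
        rw [hassoc, ← hjoin]
      have step : ∀ x : G, op 1 (δ * x) = op 1 (δ * (δ * x)) := by
        intro x
        calc op 1 (δ * x) = op δ x := (hop x).symm
          _ = op (op δ δ) x := by rw [hδ]
          _ = op δ (op δ x) := hassoc _ _ _
          _ = op 1 (δ * op δ x) := hop _
          _ = op 1 (δ * op 1 (δ * x)) := by rw [hop]
          _ = op 1 (δ * (δ * x)) := faux _ _
      have habsorb : ∀ y : G, op 1 (δ * y) = op 1 y := by
        intro y
        have h := step (δ⁻¹ * y)
        rw [mul_inv_cancel_left] at h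
        exact h.symm
      have := habsorb 1
      rw [mul_one, hfδ] at this
      exact this
    · rintro rfl
      exact ⟨hidem, hcent⟩
  · intro h
    have ha : op 1 1 ∈ {δ : G | op δ δ = δ ∧ ∀ x : G, op δ x = op x δ} := by
      rw [h]; rfl
    refine ⟨ha, ?_⟩
    intro δ hδ
    have hmem : δ ∈ {δ : G | op δ δ = δ ∧ ∀ x : G, op δ x = op x δ} := hδ
    rw [h] at hmem
    rw [Set.mem_singleton_iff] at hmem
    rw [hmem]
    exact ha.1
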